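/- Let X_1, …, X_n be real matrices with X_i ∈ ℝ^{d×d_i} and let c = (c_1,…,c_n) ∈ ℚ^n_{>0}. If (F, c) is a weighted Parseval matrix frame, i.e. ∑_{i=1}^n c_i·X_i·X_iᵀ = I_d and ‖X_i‖_F² = 1 for all i, then c ∈ K_F, i.e. (F, c) is a semi-stable matrix frame. -/

import Mathlib

open scoped BigOperators
open Matrix

namespace MFrames

/-- The squared Frobenius norm of a real matrix. -/
noncomputable def frobSq {α β : Type*} [Fintype α] [Fintype β] (X : Matrix α β ℝ) : ℝ :=
  ∑ i, ∑ j, X i j ^ 2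

variable {d n : ℕ} {m : Fin n → ℕ}

/-- Squared distance between two tuples of matrices. -/
noncomputable def dist2 (F G : ∀ i : Fin n, Matrix (Fin d) (Fin (m i)) ℝ) : ℝ :=
  ∑ i, frobSq (F i - G i)

/-- The frame operator `∑ Xᵢ Xᵢᵀ`. -/
noncomputable def frameOp (F : ∀ i : Fin n, Matrix (Fin d) (Fin (m i)) ℝ) :
    Matrix (Fin d) (Fin d) ℝ :=
  ∑ i, F i * (F i)ᵀ

/-- `F` is a matrix frame: `∑ Xᵢ Xᵢᵀ` is positive definite. -/
def IsMatrixFrame (F : ∀ i : Fin n, Matrix (Fin d) (Fin (m i)) ℝ) : Prop :=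
  (frameOp F).PosDef

/-- `F` is an ε-nearly equal-norm Parseval matrix frame. -/
def NearlyENParseval (ε : ℝ) (F : ∀ i : Fin n, Matrix (Fin d) (Fin (m i)) ℝ) : Prop :=
  (frameOp F - (1 - ε) • (1 : Matrix (Fin d) (Fin d) ℝ)).PosSemidef ∧
  ((1 + ε) • (1 : Matrix (Fin d) (Fin d) ℝ) - frameOp F).PosSemidef ∧
  ∀ i, (1 - ε) * ((d : ℝ) / n) ≤ frobSq (F i) ∧ frobSq (F i) ≤ (1 + ε) * ((d : ℝ) / n)

/-- `F` is an equal-norm Parseval matrix frame. -/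
def EqualNormParseval (F : ∀ i : Fin n, Matrix (Fin d) (Fin (m i)) ℝ) : Prop :=
  frameOp F = 1 ∧ ∀ i, frobSq (F i) = (d : ℝ) / n

/-- The columns of the concatenated matrix `[X₁ | … | Xₙ]`. -/
def col (F : ∀ i : Fin n, Matrix (Fin d) (Fin (m i)) ℝ) (p : (i : Fin n) × Fin (m i)) :
    Fin d → ℝ :=
  fun r => F p.1 r p.2

/-- `F` is generic: `n > d` and any `d` of the columns of `[X₁ | … | Xₙ]` are linearly
independent (hence a basis of `ℝ^d`). -/
def Generic (F : ∀ i : Fin n, Matrix (Fin d) (Fin (m i)) ℝ) : Prop :=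
  d < n ∧ ∀ S : Finset ((i : Fin n) × Fin (m i)), S.card = d →
    LinearIndependent ℝ (fun p : S => col F (p : (i : Fin n) × Fin (m i)))

/-- Column span of a matrix. -/
def colSpan {k : ℕ} (X : Matrix (Fin d) (Fin k) ℝ) : Submodule ℝ (Fin d → ℝ) :=
  Submodule.span ℝ (Set.range Xᵀ)

/-- The orbit polytope `K_F` of a tuple of matrices. -/
def orbitPolytope (F : ∀ i : Fin n, Matrix (Fin d) (Fin (m i)) ℝ) : Set (Fin n → ℝ) :=
  {c | (∀ i, 0 ≤ c i) ∧ (∑ i, c i = d) ∧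
    ∀ I : Finset (Fin n),
      ∑ i ∈ I, c i ≤ (Module.finrank ℝ ↥(⨆ i ∈ I, colSpan (F i)) : ℝ)}

/-- `Φ_F(t) = log det (∑ e^{tᵢ} Xᵢ Xᵢᵀ)`. -/
noncomputable def Phi (F : ∀ i : Fin n, Matrix (Fin d) (Fin (m i)) ℝ) (t : Fin n → ℝ) : ℝ :=
  Real.log (∑ i, Real.exp (t i) • (F i * (F i)ᵀ)).det

/-- The objective function `Φ_F(t) - ⟨t, c⟩` whose infimum over `t` is `f_F(c)`. -/
noncomputable def obj (F : ∀ i : Fin n, Matrix (Fin d) (Fin (m i)) ℝ)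
    (c : Fin n → ℝ) (t : Fin n → ℝ) : ℝ :=
  Phi F t - ∑ i, t i * c i

/-- `Δ_S` for `S ∈ 𝒜`, where `S` is encoded as a function `σ` assigning to each `i` a subset
`σ i ⊆ {1,…,dᵢ}` of the columns of `Xᵢ` (with `i ∈ S` iff `σ i ≠ ∅`). -/
noncomputable def Delta (F : ∀ i : Fin n, Matrix (Fin d) (Fin (m i)) ℝ)
    (σ : ∀ i : Fin n, Finset (Fin (m i))) : ℝ :=
  (∑ i, ∑ k ∈ σ i, Matrix.of (fun r s : Fin d => F i r k * F i s k)).det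

/-- The index set `𝒜`: collections of subsets of columns with `d` columns in total. -/
def indexA (d : ℕ) (m : Fin n → ℕ) : Finset (∀ i : Fin n, Finset (Fin (m i))) :=
  Finset.univ.filter fun σ => (∑ i, (σ i).card) = d

/-- Membership in the semialgebraic set `𝕍(F, c)`.  (Summing `(σ i).card • ⋯` over all of
`𝒜` is the same as summing `|Sᵢ| • ⋯` over those `S ∈ 𝒜` with `i ∈ S`.) -/
noncomputable def inVariety (F : ∀ i : Fin n, Matrix (Fin d) (Fin (m i)) ℝ)
    (c ξ : Fin n → ℝ) : Prop :=
  (∀ i, 0 < ξ i) ∧ ∀ i,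
    (∑ σ ∈ indexA d m, ((σ i).card : ℝ) * (∏ l, ξ l ^ (σ l).card) * Delta F σ)
      = c i * ∑ σ ∈ indexA d m, (∏ l, ξ l ^ (σ l).card) * Delta F σ

/-- `A` transforms `(F, c)` into a radial isotropic frame. -/
noncomputable def TransformsToRIF (F : ∀ i : Fin n, Matrix (Fin d) (Fin (m i)) ℝ)
    (c : Fin n → ℝ) (A : Matrix (Fin d) (Fin d) ℝ) : Prop :=
  ∑ i, (c i / frobSq (A * F i)) • ((A * F i) * (A * F i)ᵀ) = 1

/-- Columns of `X` all orthogonal to the subspace `T`, i.e. `Col(X) ⊆ T^⊥`. -/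
def colsPerp {k : ℕ} (X : Matrix (Fin d) (Fin k) ℝ) (T : Submodule ℝ (Fin d → ℝ)) : Prop :=
  ∀ x ∈ T, Xᵀ.mulVec x = 0

end MFrames

namespace MFrames

/-- A real matrix with nonneg diagonal-PSD has nonneg trace. -/
lemma psd_trace_nonneg {k : ℕ} {A : Matrix (Fin k) (Fin k) ℝ} (hA : A.PosSemidef) :
    0 ≤ A.trace := by
  rw [Matrix.trace]
  refine Finset.sum_nonneg fun i _ => ?_
  exact hA.diag_nonneg

lemma euc_sum_apply {d : ℕ} {ι : Type*} (s : Finset ι) (f : ι → EuclideanSpace ℝ (Fin d))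
    (u : Fin d) : (∑ x ∈ s, f x) u = ∑ x ∈ s, f x u := by
  classical
  induction s using Finset.induction with
  | empty => rfl
  | insert _ _ h ih => rw [Finset.sum_insert h, Finset.sum_insert h, PiLp.add_apply, ih]

lemma key_trace_le {d : ℕ} (V : Submodule ℝ (Fin d → ℝ))
    (A : Matrix (Fin d) (Fin d) ℝ) (h1A : ((1 : Matrix (Fin d) (Fin d) ℝ) - A).PosSemidef)
    (hcol : ∀ s, (fun r => A r s) ∈ V) :
    A.trace ≤ (Module.finrank ℝ V : ℝ) := by
  classical
  set e : (Fin d → ℝ) ≃ₗ[ℝ] EuclideanSpace ℝ (Fin d) :=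
    (WithLp.linearEquiv 2 ℝ (Fin d → ℝ)).symm with he
  set V' : Submodule ℝ (EuclideanSpace ℝ (Fin d)) := V.map e.toLinearMap with hV'
  have hrank : Module.finrank ℝ V' = Module.finrank ℝ V :=
    LinearEquiv.finrank_map_eq e V
  set r := Module.finrank ℝ V' with hr
  let b : OrthonormalBasis (Fin r) ℝ V' := stdOrthonormalBasis ℝ V'
  set M : Matrix (Fin r) (Fin d) ℝ := fun k t => ((b k : EuclideanSpace ℝ (Fin d)) t) with hM
  set P : Matrix (Fin d) (Fin d) ℝ := Mᵀ * M with hP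
  -- inner products
  have hinner : ∀ (k : Fin r) (x : V'),
      (inner ℝ (b k) x : ℝ) = ∑ t, M k t * ((x : EuclideanSpace ℝ (Fin d)) t) := by
    intro k x
    rw [Submodule.coe_inner, PiLp.inner_apply]
    simp [hM, RCLike.inner_apply, mul_comm]
  -- P * A = A
  have hPA : P * A = A := by
    ext u s
    have hxV : (fun t => A t s) ∈ V := hcol s
    set ξ : V' := ⟨e (fun t => A t s), Submodule.mem_map_of_mem hxV⟩ with hξ
    have hrepr := b.sum_repr' ξ
    have hcoe := congrArg (fun (y : V') => (y : EuclideanSpace ℝ (Fin d)) u) hrepr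
    simp only [Submodule.coe_sum, Submodule.coe_smul] at hcoe
    have hcoe' : (∑ k, (inner ℝ (b k) ξ : ℝ) * M k u) = A u s := by
      have h2 : e (fun t => A t s) u = A u s := rfl
      rw [← h2, ← hcoe, euc_sum_apply]
      simp [PiLp.smul_apply, hM, smul_eq_mul]
    calc (P * A) u s = ∑ t, ∑ k, M k t * M k u * A t s := by
          simp only [hP, Matrix.mul_apply, Matrix.transpose_apply, Finset.sum_mul]
          exact Finset.sum_congr rfl fun t _ => Finset.sum_congr rfl fun k _ => by ring
      _ = ∑ k, ∑ t, M k t * M k u * A t s := Finset.sum_comm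
      _ = ∑ k, (∑ t, M k t * A t s) * M k u := by
          refine Finset.sum_congr rfl fun k _ => ?_
          rw [Finset.sum_mul]
          exact Finset.sum_congr rfl fun t _ => by ring
      _ = ∑ k, (inner ℝ (b k) ξ : ℝ) * M k u := by
          refine Finset.sum_congr rfl fun k _ => ?_
          rw [hinner k ξ]
          rfl
      _ = A u s := hcoe'
  -- trace P = r
  have htrP : P.trace = (r : ℝ) := by
    have : ∀ k : Fin r, ∑ t, M k t * M k t = 1 := by
      intro k
      have h1 : (inner ℝ (b k) (b k) : ℝ) = 1 := by
        have := b.orthonormal.1 k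
        rw [real_inner_self_eq_norm_mul_norm, this]; norm_num
      rw [hinner k (b k)] at h1
      exact h1
    calc P.trace = ∑ t, ∑ k, M k t * M k t := by
          simp [hP, Matrix.trace, Matrix.diag, Matrix.mul_apply, Matrix.transpose_apply]
      _ = ∑ k, ∑ t, M k t * M k t := Finset.sum_comm
      _ = (r : ℝ) := by simp [this]
  -- trace (P * (1 - A)) ≥ 0
  have hnn : 0 ≤ (P * (1 - A)).trace := by
    have h1 : P * (1 - A) = Mᵀ * (M * (1 - A)) := by rw [hP, Matrix.mul_assoc]
    rw [h1, Matrix.trace_mul_comm]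
    have := (h1A.mul_mul_conjTranspose_same M)
    rw [Matrix.conjTranspose_eq_transpose_of_trivial] at this
    exact psd_trace_nonneg this
  have hsplit : A.trace = P.trace - (P * (1 - A)).trace := by
    rw [Matrix.mul_sub, Matrix.mul_one, Matrix.trace_sub, hPA]
    ring
  rw [hsplit, ← hrank]
  linarith [hnn, htrP.ge, htrP.le]



lemma trace_mul_transpose {d k : ℕ} (X : Matrix (Fin d) (Fin k) ℝ) :
    (X * Xᵀ).trace = frobSq X := by
  simp [Matrix.trace, Matrix.diag, Matrix.mul_apply, frobSq, sq]

lemma smul_mulT_psd {d k : ℕ} (X : Matrix (Fin d) (Fin k) ℝ) {a : ℝ} (ha : 0 ≤ a) :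
    (a • (X * Xᵀ)).PosSemidef := by
  have h : a • (X * Xᵀ) = (Real.sqrt a • X) * (Real.sqrt a • X)ᴴ := by
    rw [Matrix.conjTranspose_eq_transpose_of_trivial, Matrix.transpose_smul,
        Matrix.smul_mul, Matrix.mul_smul, smul_smul, Real.mul_self_sqrt ha]
  rw [h]; exact Matrix.posSemidef_self_mul_conjTranspose _

/-- **Corollary (2).**  If `(F, c)` is a weighted Parseval matrix frame
(`∑ cᵢ Xᵢ Xᵢᵀ = I_d` and `‖Xᵢ‖_F² = 1` for all `i`), then `c ∈ K_F`, i.e. `(F, c)` is a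
semi-stable matrix frame. -/
theorem parseval_is_semistable {d n : ℕ} {m : Fin n → ℕ}
    (F : ∀ i : Fin n, Matrix (Fin d) (Fin (m i)) ℝ)
    (c : Fin n → ℚ) (hc : ∀ i, 0 < c i)
    (hP : ∑ i, (c i : ℝ) • (F i * (F i)ᵀ) = (1 : Matrix (Fin d) (Fin d) ℝ))
    (hnorm : ∀ i, frobSq (F i) = 1) :
    (fun i => (c i : ℝ)) ∈ orbitPolytope F := by
  classical
  have htr : ∀ i, ((c i : ℝ) • (F i * (F i)ᵀ)).trace = (c i : ℝ) := by
    intro i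
    rw [Matrix.trace_smul, trace_mul_transpose, hnorm i, smul_eq_mul, mul_one]
  refine ⟨fun i => by simpa using (hc i).le, ?_, ?_⟩
  · have h := congrArg Matrix.trace hP
    rw [Matrix.trace_sum, Matrix.trace_one] at h
    simpa [htr] using h
  · intro I
    set V : Submodule ℝ (Fin d → ℝ) := ⨆ i ∈ I, colSpan (F i) with hV
    set A : Matrix (Fin d) (Fin d) ℝ := ∑ i ∈ I, (c i : ℝ) • (F i * (F i)ᵀ) with hA
    have h1A : ((1 : Matrix (Fin d) (Fin d) ℝ) - A).PosSemidef := by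
      have hsplit : (1 : Matrix (Fin d) (Fin d) ℝ) - A = ∑ i ∈ Iᶜ, (c i : ℝ) • (F i * (F i)ᵀ) := by
        rw [← hP, ← Finset.sum_compl_add_sum I, hA]; abel
      rw [hsplit]
      refine Finset.sum_induction _ _ (fun a b ha hb => ha.add hb) Matrix.PosSemidef.zero ?_
      intro i _
      exact smul_mulT_psd (F i) (by exact_mod_cast (hc i).le)
    have hcol : ∀ s, (fun r => A r s) ∈ V := by
      intro s
      have hAcol : (fun r => A r s)
          = ∑ i ∈ I, ∑ k, ((c i : ℝ) * F i s k) • (fun r => F i r k) := by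
        funext r
        rw [hA]
        simp only [Finset.sum_apply, Pi.smul_apply, smul_eq_mul, Matrix.sum_apply,
          Matrix.smul_apply, Matrix.mul_apply, Finset.mul_sum]
        refine Finset.sum_congr rfl fun i _ => Finset.sum_congr rfl fun k _ => by
          simp [Matrix.transpose_apply]; ring
      rw [hAcol]
      refine Submodule.sum_mem _ fun i hi => Submodule.sum_mem _ fun k _ => ?_
      refine Submodule.smul_mem _ _ ?_
      have hle : colSpan (F i) ≤ V := le_iSup₂ (f := fun i _ => colSpan (F i)) i hi
      exact hle (Submodule.subset_span ⟨k, rfl⟩)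
    have htrA : A.trace = ∑ i ∈ I, (c i : ℝ) := by
      rw [hA, Matrix.trace_sum]
      exact Finset.sum_congr rfl fun i _ => htr i
    have := key_trace_le V A h1A hcol
    rw [htrA] at this
    exact this


end MFrames
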